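/- Under these hypotheses, the element ũ := (1/9)·Σ_{A∈I} e_A satisfies ũ·ũ = 2ũ and (ũ|ũ) = 28/5; that is, ũ is a Virasoro vector of central charge 2(ũ|ũ) = 56/5 (so that in V_{K₁₂}^{ν̂} the difference ω_{K₁₂} − ũ is a Virasoro vector of central charge 4/5). -/

import Mathlib

/-- Given a family of 126 distinct idempotent-like elements `e_A`
in an invariant-form commutative algebra (modelling the `c = 4/5` Virasoro
vectors attached to the ν-invariant `√2A₂`-sublattices of the Coxeter–Todd
lattice `K₁₂`), with `e_A·e_A = 2e_A`, `(e_A|e_A) = 2/5`, every `e_A` having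
exactly 80 "neighbours" permuted by `τ_A`, and the stated two-point relations,
the element `ũ = (1/9)Σ_A e_A` satisfies `ũ·ũ = 2ũ` and `(ũ|ũ) = 28/5`,
i.e. `ũ` is a Virasoro vector of central charge `56/5`. -/
theorem stmt_9 {B : Type*} [AddCommGroup B] [Module ℝ B]
    (mul : B →ₗ[ℝ] B →ₗ[ℝ] B) (bf : B →ₗ[ℝ] B →ₗ[ℝ] ℝ)
    (hcomm : ∀ x y, mul x y = mul y x)
    (hsymm : ∀ x y, bf x y = bf y x)
    (hinv : ∀ x y z, bf (mul x y) z = bf x (mul y z))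
    (ι : Type*) [Fintype ι] (hcard : Fintype.card ι = 126)
    (e : ι → B) (hinj : Function.Injective e)
    (hd : ∀ A, mul (e A) (e A) = (2 : ℝ) • e A)
    (hbd : ∀ A, bf (e A) (e A) = 2/5)
    (τ : ι → ι → ι)
    (hτ : ∀ A : ι, Set.BijOn (τ A)
      {C : ι | C ≠ A ∧ mul (e A) (e C) ≠ 0} {C : ι | C ≠ A ∧ mul (e A) (e C) ≠ 0})
    (hN : ∀ A : ι, Set.ncard {C : ι | C ≠ A ∧ mul (e A) (e C) ≠ 0} = 80)
    (hoff : ∀ A C : ι, A ≠ C →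
      (mul (e A) (e C) = 0 ∧ bf (e A) (e C) = 0) ∨
      (bf (e A) (e C) = 1/25 ∧
        mul (e A) (e C) = (1/5 : ℝ) • (e A + e C - e (τ A C)))) :
    mul ((1/9 : ℝ) • ∑ A, e A) ((1/9 : ℝ) • ∑ A, e A)
        = (2 : ℝ) • ((1/9 : ℝ) • ∑ A, e A) ∧
    bf ((1/9 : ℝ) • ∑ A, e A) ((1/9 : ℝ) • ∑ A, e A) = 28/5 := by
  classical
  -- if the product vanishes, so does the form value
  have key0 : ∀ A C : ι, mul (e A) (e C) = 0 → bf (e A) (e C) = 0 := by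
    intro A C h
    have h1 : bf (mul (e A) (e A)) (e C) = bf (e A) (mul (e A) (e C)) := hinv _ _ _
    rw [hd A, h] at h1
    simp only [map_smul, LinearMap.smul_apply, map_zero, smul_eq_mul] at h1
    linarith
  -- per-index data
  have hrow : ∀ A : ι, (∑ C, mul (e A) (e C) = (18 : ℝ) • e A) ∧
      (∑ C, bf (e A) (e C) = 18/5) := by
    intro A
    set S : Set ι := {C | C ≠ A ∧ mul (e A) (e C) ≠ 0} with hS
    have hfin : S.Finite := Set.toFinite S
    set F : Finset ι := hfin.toFinset with hF
    have hmemF : ∀ C, C ∈ F ↔ (C ≠ A ∧ mul (e A) (e C) ≠ 0) := by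
      intro C
      rw [hF, Set.Finite.mem_toFinset]
      rfl
    have hAnot : A ∉ F := by
      intro h
      exact ((hmemF A).1 h).1 rfl
    have hcardF : F.card = 80 := by
      have h := hN A
      rw [Set.ncard_eq_toFinset_card _ hfin] at h
      exact hF ▸ h
    -- the sum over all indices localizes to `insert A F`
    have hzero : ∀ C ∈ Finset.univ, C ∉ insert A F → mul (e A) (e C) = 0 := by
      intro C _ hC
      rw [Finset.mem_insert] at hC
      push_neg at hC
      obtain ⟨hCA, hCF⟩ := hC
      by_contra h
      exact hCF ((hmemF C).2 ⟨hCA, h⟩)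
    -- the bijection τ A on F
    have hbij : ∑ C ∈ F, e (τ A C) = ∑ C ∈ F, e C := by
      refine Finset.sum_bij (fun C _ => τ A C) ?_ ?_ ?_ ?_
      · intro a ha
        exact (hmemF _).2 ((hτ A).mapsTo ((hmemF a).1 ha))
      · intro a ha b hb hab
        exact (hτ A).injOn ((hmemF a).1 ha) ((hmemF b).1 hb) hab
      · intro b hb
        obtain ⟨a, ha, hab⟩ := (hτ A).surjOn ((hmemF b).1 hb)
        exact ⟨a, (hmemF a).2 ha, hab⟩
      · intro a ha; rfl
    have hsecond : ∀ C ∈ F, mul (e A) (e C) = (1/5 : ℝ) • (e A + e C - e (τ A C)) := by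
      intro C hC
      obtain ⟨hCA, hne⟩ := (hmemF C).1 hC
      rcases hoff A C (Ne.symm hCA) with ⟨h0, _⟩ | ⟨_, h⟩
      · exact absurd h0 hne
      · exact h
    have hbfF : ∀ C ∈ F, bf (e A) (e C) = 1/25 := by
      intro C hC
      obtain ⟨hCA, hne⟩ := (hmemF C).1 hC
      rcases hoff A C (Ne.symm hCA) with ⟨h0, _⟩ | ⟨h, _⟩
      · exact absurd h0 hne
      · exact h
    constructor
    · have h1 : ∑ C, mul (e A) (e C) = ∑ C ∈ insert A F, mul (e A) (e C) :=
        (Finset.sum_subset (Finset.subset_univ _) hzero).symm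
      rw [h1, Finset.sum_insert hAnot, hd A, Finset.sum_congr rfl hsecond]
      have h2 : ∑ C ∈ F, (1/5 : ℝ) • (e A + e C - e (τ A C))
          = (1/5 : ℝ) • ((F.card : ℝ) • e A + ∑ C ∈ F, e C - ∑ C ∈ F, e (τ A C)) := by
        rw [← Finset.smul_sum]
        congr 1
        rw [Finset.sum_sub_distrib, Finset.sum_add_distrib, Finset.sum_const,
          ← Nat.cast_smul_eq_nsmul ℝ]
      rw [h2, hbij, hcardF, add_sub_cancel_right, smul_smul, ← add_smul]
      norm_num
    · have hzero' : ∀ C ∈ Finset.univ, C ∉ insert A F → bf (e A) (e C) = 0 := by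
        intro C h1 h2
        exact key0 A C (hzero C h1 h2)
      have h1 : ∑ C, bf (e A) (e C) = ∑ C ∈ insert A F, bf (e A) (e C) :=
        (Finset.sum_subset (Finset.subset_univ _) hzero').symm
      rw [h1, Finset.sum_insert hAnot, hbd A, Finset.sum_congr rfl hbfF,
        Finset.sum_const, hcardF]
      norm_num
  -- total sums
  have hmul_sum : ∀ A : ι, mul (e A) (∑ C, e C) = (18 : ℝ) • e A := by
    intro A
    rw [map_sum]
    exact (hrow A).1
  have hbf_sum : ∀ A : ι, bf (e A) (∑ C, e C) = 18/5 := by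
    intro A
    rw [map_sum]
    exact (hrow A).2
  have huu : mul (∑ A, e A) (∑ A, e A) = (18 : ℝ) • ∑ A, e A := by
    have h1 : mul (∑ A, e A) = ∑ A, mul (e A) := map_sum mul e Finset.univ
    rw [h1, LinearMap.sum_apply]
    rw [Finset.sum_congr rfl fun A _ => hmul_sum A, ← Finset.smul_sum]
  have hbuu : bf (∑ A, e A) (∑ A, e A) = 2268/5 := by
    have h1 : bf (∑ A, e A) = ∑ A, bf (e A) := map_sum bf e Finset.univ
    rw [h1, LinearMap.sum_apply]
    rw [Finset.sum_congr rfl fun A _ => hbf_sum A, Finset.sum_const,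
      Finset.card_univ, hcard]
    norm_num
  constructor
  · simp only [map_smul, LinearMap.smul_apply]
    rw [huu, smul_smul, smul_smul, smul_smul]
    norm_num
  · simp only [map_smul, LinearMap.smul_apply, smul_eq_mul]
    rw [hbuu]
    norm_num
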